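/- Interior-case closed form: let a_1 > a_2 > ... > a_n > 0, e_i = √(a_i/a_1) (so e_1 = 1), and suppose n·e_n > e_1 + e_2 + ... + e_{n−1}. Then the point x* with coordinates x*_j = (n·e_j − Σ_{i≠j} e_i)/(e_1 + ... + e_n), j = 1,...,n, lies in the simplex S_n with all coordinates strictly positive, and it is the unique maximizer of F(x) = Σ_{i=1}^n a_i x_i/(1+x_i) over S_n. -/

import Mathlib

open Finset

private lemma mid_le (a u v : ℝ) (ha : 0 < a) (hu : 0 ≤ u) (hv : 0 ≤ v) :
    (a*u/(1+u) + a*v/(1+v))/2 ≤ a*((u+v)/2)/(1+(u+v)/2) := by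
  have h1 : (0:ℝ) < 1 + u := by linarith
  have h2 : (0:ℝ) < 1 + v := by linarith
  have key : a*((u+v)/2)/(1+(u+v)/2) - (a*u/(1+u) + a*v/(1+v))/2
      = a*(u-v)^2/(2*(1+u)*(1+v)*(2+u+v)) := by
    field_simp
    ring
  nlinarith [div_nonneg (mul_nonneg ha.le (sq_nonneg (u-v)))
    (by positivity : (0:ℝ) ≤ 2*(1+u)*(1+v)*(2+u+v))]

private lemma mid_strict (a u v : ℝ) (ha : 0 < a) (hu : 0 ≤ u) (hv : 0 ≤ v) (huv : u ≠ v) :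
    (a*u/(1+u) + a*v/(1+v))/2 < a*((u+v)/2)/(1+(u+v)/2) := by
  have h1 : (0:ℝ) < 1 + u := by linarith
  have h2 : (0:ℝ) < 1 + v := by linarith
  have key : a*((u+v)/2)/(1+(u+v)/2) - (a*u/(1+u) + a*v/(1+v))/2
      = a*(u-v)^2/(2*(1+u)*(1+v)*(2+u+v)) := by
    field_simp
    ring
  have hp : 0 < a*(u-v)^2/(2*(1+u)*(1+v)*(2+u+v)) := by
    have : u - v ≠ 0 := sub_ne_zero.2 huv
    positivity
  linarith

/-- interior-case closed form: with `e i = √(a i / a 0)` (so the first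
`e` equals 1), if `n * e_last > ∑ of the other e's`, then the point
`x* j = (n * e j - ∑_{i ≠ j} e i) / (∑ i, e i)` lies in the simplex with all
coordinates strictly positive, and it is the unique maximizer of
`F x = ∑ i, a i * x i / (1 + x i)` over the simplex. -/
theorem stmt_8 (n : ℕ) (hn : 2 ≤ n) (a : Fin n → ℝ)
    (ha : StrictAnti a) (hpos : ∀ i, 0 < a i)
    (e : Fin n → ℝ) (he : ∀ i, e i = Real.sqrt (a i / a ⟨0, by omega⟩))
    (hint : (∑ i ∈ Finset.univ.erase (⟨n - 1, by omega⟩ : Fin n), e i)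
      < (n : ℝ) * e ⟨n - 1, by omega⟩)
    (xs : Fin n → ℝ)
    (hxs : ∀ j, xs j =
      ((n : ℝ) * e j - ∑ i ∈ Finset.univ.erase j, e i) / ∑ i, e i) :
    (∑ j, xs j = 1 ∧ ∀ j, 0 < xs j) ∧
    (∀ y : Fin n → ℝ, (∑ i, y i = 1 ∧ ∀ i, 0 ≤ y i) →
      ∑ i, a i * y i / (1 + y i) ≤ ∑ i, a i * xs i / (1 + xs i)) ∧
    (∀ z : Fin n → ℝ, (∑ i, z i = 1 ∧ ∀ i, 0 ≤ z i) →
      (∀ y : Fin n → ℝ, (∑ i, y i = 1 ∧ ∀ i, 0 ≤ y i) →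
        ∑ i, a i * y i / (1 + y i) ≤ ∑ i, a i * z i / (1 + z i)) →
      z = xs) := by
  set i0 : Fin n := ⟨0, by omega⟩ with hi0
  set il : Fin n := ⟨n - 1, by omega⟩ with hil
  have ha0 : 0 < a i0 := hpos i0
  have hepos : ∀ i, 0 < e i := fun i => by
    rw [he i]; exact Real.sqrt_pos.2 (div_pos (hpos i) ha0)
  set s : ℝ := ∑ i, e i with hsdef
  have hs : 0 < s := Finset.sum_pos (fun i _ => hepos i) ⟨i0, mem_univ _⟩
  -- rewrite xs
  have hx' : ∀ j, xs j = (((n:ℝ)+1) * e j - s)/s := by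
    intro j
    rw [hxs j, Finset.sum_erase_eq_sub (mem_univ j)]
    congr 1
    ring
  have h1x : ∀ j, 1 + xs j = ((n:ℝ)+1) * e j / s := by
    intro j
    rw [hx' j]
    field_simp
    ring
  -- sum of xs is 1
  have hsum : ∑ j, xs j = 1 := by
    have hms : (∑ j, xs j) * s = s := by
      rw [Finset.sum_mul]
      have h1 : ∀ j ∈ univ, xs j * s = ((n:ℝ)+1) * e j - s := fun j _ => by
        rw [hx' j]; field_simp
      rw [Finset.sum_congr rfl h1, Finset.sum_sub_distrib, ← Finset.mul_sum]
      simp only [Finset.sum_const, Finset.card_univ, Fintype.card_fin, nsmul_eq_mul,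
        ← hsdef]
      ring
    have := mul_right_cancel₀ hs.ne' (hms.trans (one_mul s).symm)
    exact this
  -- positivity of xs
  have hklt : s < ((n:ℝ)+1) * e il := by
    have h2 := hint
    rw [Finset.sum_erase_eq_sub (mem_univ il)] at h2
    have : (∑ i, e i) = s := rfl
    linarith [h2]
  have hemin : ∀ j, e il ≤ e j := by
    intro j
    rw [he il, he j]
    have hj : j ≤ il := by
      have := j.isLt
      exact Fin.mk_le_mk.mpr (by omega) |>.trans_eq rfl
    have haa : a il ≤ a j := ha.antitone hj
    gcongr
  have hxpos : ∀ j, 0 < xs j := by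
    intro j
    rw [hx' j]
    apply div_pos _ hs
    have : ((n:ℝ)+1) * e il ≤ ((n:ℝ)+1) * e j := by
      have hn1 : (0:ℝ) ≤ (n:ℝ)+1 := by positivity
      exact mul_le_mul_of_nonneg_left (hemin j) hn1
    linarith
  -- sqrt facts
  have hsq : ∀ i, Real.sqrt (a i) = Real.sqrt (a i0) * e i := by
    intro i
    rw [he i, Real.sqrt_div (hpos i).le]
    field_simp
  have hae : ∀ i, a i = a i0 * (e i)^2 := by
    intro i
    have : (e i)^2 = a i / a i0 := by
      rw [he i]
      exact Real.sq_sqrt (div_nonneg (hpos i).le ha0.le)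
    rw [this]
    field_simp
  -- value at xs
  have hFxs : ∑ i, a i * xs i / (1 + xs i) = (∑ i, a i) - a i0 * s^2 / ((n:ℝ)+1) := by
    have hterm : ∀ i ∈ univ, a i * xs i / (1 + xs i) = a i - a i0 * e i * s / ((n:ℝ)+1) := by
      intro i _
      rw [h1x i, hx' i, hae i]
      have h1 : e i ≠ 0 := (hepos i).ne'
      have h2 : s ≠ 0 := hs.ne'
      have h3 : ((n:ℝ)+1) ≠ 0 := by positivity
      field_simp
    rw [Finset.sum_congr rfl hterm, Finset.sum_sub_distrib]
    congr 1
    rw [← Finset.sum_div, ← Finset.sum_mul, ← Finset.mul_sum, ← hsdef]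
    ring
  -- maximality
  have hmax : ∀ y : Fin n → ℝ, (∑ i, y i = 1 ∧ ∀ i, 0 ≤ y i) →
      ∑ i, a i * y i / (1 + y i) ≤ ∑ i, a i * xs i / (1 + xs i) := by
    intro y ⟨hy1, hy0⟩
    have h1y : ∀ i, (0:ℝ) < 1 + y i := fun i => by linarith [hy0 i]
    have hFy : ∑ i, a i * y i / (1 + y i) = (∑ i, a i) - ∑ i, a i / (1 + y i) := by
      rw [← Finset.sum_sub_distrib]
      refine Finset.sum_congr rfl fun i _ => ?_
      have := (h1y i).ne'
      field_simp
      ring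
    have hsum1y : ∑ i, (1 + y i) = (n:ℝ) + 1 := by
      rw [Finset.sum_add_distrib, hy1]
      simp [Finset.card_univ]
    have hCS : (∑ i, Real.sqrt (a i))^2 / ((n:ℝ)+1) ≤ ∑ i, a i / (1 + y i) := by
      have := Finset.sq_sum_div_le_sum_sq_div univ (fun i => Real.sqrt (a i))
        (g := fun i => 1 + y i) (fun i _ => h1y i)
      rw [hsum1y] at this
      refine this.trans_eq (Finset.sum_congr rfl fun i _ => ?_)
      rw [Real.sq_sqrt (hpos i).le]
    have hsrt : ∑ i, Real.sqrt (a i) = Real.sqrt (a i0) * s := by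
      rw [Finset.sum_congr rfl fun i _ => hsq i, ← Finset.mul_sum]
    have hsq0 : (Real.sqrt (a i0))^2 = a i0 := Real.sq_sqrt ha0.le
    rw [hsrt] at hCS
    have : a i0 * s^2 / ((n:ℝ)+1) ≤ ∑ i, a i / (1 + y i) := by
      calc a i0 * s^2 / ((n:ℝ)+1) = (Real.sqrt (a i0) * s)^2 / ((n:ℝ)+1) := by
            rw [mul_pow, hsq0]
        _ ≤ _ := hCS
    rw [hFy, hFxs]
    linarith
  refine ⟨⟨hsum, hxpos⟩, hmax, ?_⟩
  -- uniqueness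
  intro z ⟨hz1, hz0⟩ hzmax
  by_contra hne
  obtain ⟨j, hj⟩ : ∃ j, z j ≠ xs j := by
    by_contra h
    push_neg at h
    exact hne (funext h)
  set m : Fin n → ℝ := fun i => (z i + xs i)/2 with hm
  have hm1 : ∑ i, m i = 1 := by
    simp only [hm, ← Finset.sum_div, Finset.sum_add_distrib, hz1, hsum]
    norm_num
  have hm0 : ∀ i, 0 ≤ m i := fun i => by
    have := hz0 i; have := (hxpos i).le
    simp only [hm]; linarith
  have hFzx : ∑ i, a i * z i / (1 + z i) = ∑ i, a i * xs i / (1 + xs i) := by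
    have h1 := hmax z ⟨hz1, hz0⟩
    have h2 := hzmax xs ⟨hsum, fun i => (hxpos i).le⟩
    linarith
  have hstrict : (∑ i, a i * z i / (1 + z i) + ∑ i, a i * xs i / (1 + xs i))/2
      < ∑ i, a i * m i / (1 + m i) := by
    rw [← Finset.sum_add_distrib, Finset.sum_div]
    apply Finset.sum_lt_sum
    · intro i _
      exact mid_le (a i) (z i) (xs i) (hpos i) (hz0 i) (hxpos i).le
    · exact ⟨j, mem_univ j, mid_strict (a j) (z j) (xs j) (hpos j) (hz0 j) (hxpos j).le hj⟩
  have hle := hzmax m ⟨hm1, hm0⟩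
  rw [hFzx] at hstrict
  linarith
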